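/- Let T be a bounded operator on a Hilbert space and r a positive integer such that both T^r and T^{r+1} are m-isometries. Then T is an m-isometry. -/
import Mathlib

open Finset Polynomial

noncomputable def Sh : (ℕ → ℝ) →ₗ[ℝ] (ℕ → ℝ) where
  toFun a := fun n => a (n+1)
  map_add' := by intros; rfl
  map_smul' := by intros; rfl

lemma Sh_pow (s : ℕ) (a : ℕ → ℝ) (n : ℕ) : ((Sh ^ s) a) n = a (n + s) := by
  induction s generalizing a n with
  | zero => simp
  | succ s ih =>
    rw [pow_succ, Module.End.mul_apply, ih]; rfl

lemma expand_aux (s m : ℕ) (a : ℕ → ℝ) (n : ℕ) :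
    ((Polynomial.aeval Sh (((X:ℝ[X])^s - 1)^m)) a) n
      = ∑ k ∈ range (m+1), (-1:ℝ)^(m-k) * (m.choose k) * a (n + s*k) := by
  rw [sub_pow]
  have hterm : ∀ k ∈ range (m+1),
      ((-1:ℝ[X])^(k+m) * ((X:ℝ[X])^s)^k * 1^(m-k) * (m.choose k : ℝ[X]))
        = C ((-1:ℝ)^(m-k) * (m.choose k)) * X^(s*k) := by
    intro k hk
    have hsign : ((-1:ℝ))^(k+m) = (-1:ℝ)^(m-k) := by
      rw [mem_range] at hk
      have : k + m = (m - k) + 2*k := by omega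
      rw [this, pow_add]
      simp [pow_mul]
    rw [show ((-1:ℝ[X])^(k+m)) = C ((-1:ℝ)^(k+m)) by simp,
      show ((m.choose k : ℝ[X])) = C ((m.choose k : ℝ)) by simp, hsign,
      one_pow, mul_one, ← pow_mul, mul_right_comm, ← C_mul]
  rw [Finset.sum_congr rfl hterm]
  simp only [map_sum, map_mul, map_pow, aeval_X, aeval_C]
  rw [LinearMap.sum_apply]
  simp only [Finset.sum_apply, Module.End.mul_apply, Module.algebraMap_end_apply,
    Pi.smul_apply, smul_eq_mul]
  refine Finset.sum_congr rfl fun k hk => ?_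
  rw [← map_pow, Module.algebraMap_end_apply]
  simp [Sh_pow, mul_assoc]

lemma aeval_zero_of (s m : ℕ) (a : ℕ → ℝ)
    (h : ∀ n, ∑ k ∈ range (m+1), (-1:ℝ)^(m-k) * (m.choose k) * a (n + s*k) = 0) :
    (Polynomial.aeval Sh (((X:ℝ[X])^s - 1)^m)) a = 0 := by
  funext n
  show _ = (0:ℝ)
  rw [expand_aux]
  exact h n

lemma bezout (r m : ℕ) : ∃ u v : ℝ[X],
    u * ((X:ℝ[X])^r - 1)^m + v * ((X:ℝ[X])^(r+1) - 1)^m = (X - 1)^m := by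
  have hco : IsCoprime (∑ i ∈ range r, (X:ℝ[X])^i) (∑ i ∈ range (r+1), (X:ℝ[X])^i) := by
    refine ⟨-X, 1, ?_⟩
    linear_combination (Finset.sum_range_succ (fun i => (X:ℝ[X])^i) r)
      - geom_sum_mul (X:ℝ[X]) r
  obtain ⟨u, v, huv⟩ := (hco.pow (n := m) (m := m))
  refine ⟨u, v, ?_⟩
  rw [← geom_sum_mul (X:ℝ[X]) r, ← geom_sum_mul (X:ℝ[X]) (r+1), mul_pow, mul_pow,
    ← mul_assoc, ← mul_assoc, ← add_mul, huv, one_mul]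

theorem stmt_19 {H : Type*} [NormedAddCommGroup H] [InnerProductSpace ℂ H] [CompleteSpace H]
    (T : H →L[ℂ] H) (m : ℕ) (hm : 0 < m) (r : ℕ) (hr : 0 < r)
    (hTr : ∀ x : H, ∑ k ∈ range (m + 1),
      ((-1 : ℝ)) ^ (m - k) * (m.choose k) * ‖((T ^ r) ^ k) x‖ ^ 2 = 0)
    (hTr1 : ∀ x : H, ∑ k ∈ range (m + 1),
      ((-1 : ℝ)) ^ (m - k) * (m.choose k) * ‖((T ^ (r + 1)) ^ k) x‖ ^ 2 = 0) :
    ∀ x : H, ∑ k ∈ range (m + 1),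
      ((-1 : ℝ)) ^ (m - k) * (m.choose k) * ‖(T ^ k) x‖ ^ 2 = 0 := by
  intro x
  set a : ℕ → ℝ := fun n => ‖(T ^ n) x‖ ^ 2 with ha
  have hseq : ∀ s : ℕ, (∀ y : H, ∑ k ∈ range (m + 1),
      ((-1 : ℝ)) ^ (m - k) * (m.choose k) * ‖((T ^ s) ^ k) y‖ ^ 2 = 0) →
      ∀ n, ∑ k ∈ range (m+1), (-1:ℝ)^(m-k) * (m.choose k) * a (n + s*k) = 0 := by
    intro s hs n
    have e : ∀ k : ℕ, ((T ^ s) ^ k) ((T ^ n) x) = (T ^ (n + s * k)) x := by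
      intro k
      rw [← pow_mul, add_comm, pow_add, ContinuousLinearMap.mul_apply]
    simpa only [e] using hs ((T ^ n) x)
  have hA : (Polynomial.aeval Sh (((X:ℝ[X])^r - 1)^m)) a = 0 :=
    aeval_zero_of r m a (hseq r hTr)
  have hB : (Polynomial.aeval Sh (((X:ℝ[X])^(r+1) - 1)^m)) a = 0 :=
    aeval_zero_of (r+1) m a (hseq (r+1) hTr1)
  obtain ⟨u, v, key⟩ := bezout r m
  have hz : (Polynomial.aeval Sh (((X:ℝ[X])^1 - 1)^m)) a = 0 := by
    rw [pow_one, ← key, map_add, map_mul, map_mul]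
    simp only [LinearMap.add_apply, Module.End.mul_apply, hA, hB, map_zero, add_zero]
  have := expand_aux 1 m a 0
  rw [hz] at this
  simp only [Pi.zero_apply, zero_add, one_mul] at this
  exact this.symm
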